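/- Fix n > 0, integers a_k with 0 ≤ a_k < k for 0 < k < n, and nonzero scalars β₀, …, β_{n−1} ∈ F, char F = 0, with β_n ∈ F* also fixed, such that β_n/β₀ ∉ ℚ_{<0}. Then the linear operator R₁ on F₀[x,y] defined on monomials by R₁(x^{sn+k} y^m) = ((k−a_k)β_k β_n / (sβ₀ + (m+k−a_k)β_n)) x^{sn} y^{m+k−a_k} for 0 < k < n, and R₁(x^{sn} y^m) = (β₀β_n/(sβ₀ + mβ_n)) x^{sn} y^m for s + m > 0, is a Rota–Baxter operator of weight zero on F₀[x,y]. -/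
import Mathlib


open MvPolynomial

namespace Stmt15Aux

def red (a : ℕ → ℕ) (k : ℕ) : ℕ := if k = 0 then 0 else k - a k

noncomputable def num {F : Type*} [Field F] (a : ℕ → ℕ) (β : ℕ → F) (βn : F) (k : ℕ) : F :=
  if k = 0 then β 0 * βn else ((k - a k : ℕ) : F) * β k * βn

lemma hden {F : Type*} [Field F] [CharZero F] (β : ℕ → F) (hβ0 : β 0 ≠ 0) (βn : F) (hβn : βn ≠ 0)
    (hQ : ∀ q : ℚ, q < 0 → βn ≠ (q : F) * β 0)
    (s m : ℕ) (h : 0 < s + m) : (s : F) * β 0 + (m : F) * βn ≠ 0 := by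
  intro h0
  rcases Nat.eq_zero_or_pos m with hm | hm
  · subst hm
    simp only [Nat.cast_zero, zero_mul, add_zero] at h0
    exact mul_ne_zero (Nat.cast_ne_zero.mpr (by omega)) hβ0 h0
  · rcases Nat.eq_zero_or_pos s with hs | hs
    · subst hs
      simp only [Nat.cast_zero, zero_mul, zero_add] at h0
      exact hβn ((mul_eq_zero.mp h0).resolve_left (Nat.cast_ne_zero.mpr (by omega)))
    · have hq : (-(s:ℚ)/m) < 0 := by
        have h1 : (0:ℚ) < s := by exact_mod_cast hs
        have h2 : (0:ℚ) < m := by exact_mod_cast hm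
        exact div_neg_of_neg_of_pos (by linarith) h2
      apply hQ _ hq
      have hmF : (m:F) ≠ 0 := Nat.cast_ne_zero.mpr (by omega)
      push_cast
      field_simp
      linear_combination h0

lemma key {F : Type*} [Field F] [CharZero F]
    (n : ℕ) (hn : 0 < n)
    (a : ℕ → ℕ) (ha : ∀ k : ℕ, 0 < k → k < n → a k < k)
    (β : ℕ → F) (βn : F)
    (R : MvPolynomial (Fin 2) F →ₗ[F] MvPolynomial (Fin 2) F)
    (hR1 : ∀ s k m : ℕ, 0 < k → k < n →
      R (X 0 ^ (s * n + k) * X 1 ^ m) =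
        (((k - a k : ℕ) : F) * β k * βn /
          ((s : F) * β 0 + ((m + k - a k : ℕ) : F) * βn)) •
        (X 0 ^ (s * n) * X 1 ^ (m + k - a k)))
    (hR2 : ∀ s m : ℕ, 0 < s + m →
      R (X 0 ^ (s * n) * X 1 ^ m) =
        (β 0 * βn / ((s : F) * β 0 + (m : F) * βn)) •
        (X 0 ^ (s * n) * X 1 ^ m))
    (s k m : ℕ) (hk : k < n) (h : 0 < s + (m + red a k)) :
    R (X 0 ^ (s * n + k) * X 1 ^ m) =
      (num a β βn k / ((s : F) * β 0 + ((m + red a k : ℕ) : F) * βn)) •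
        (X 0 ^ (s * n) * X 1 ^ (m + red a k)) := by
  rcases Nat.eq_zero_or_pos k with h0 | h0
  · subst h0
    simp only [red, if_pos rfl, add_zero, num] at h ⊢
    simpa using hR2 s m h
  · have hak : a k < k := ha k h0 hk
    have e : m + k - a k = m + red a k := by
      simp only [red, if_neg (Nat.pos_iff_ne_zero.mp h0)]
      omega
    rw [hR1 s k m h0 hk, e]
    simp only [num, if_neg (Nat.pos_iff_ne_zero.mp h0)]

end Stmt15Aux

namespace Stmt15Aux

lemma mono {F : Type*} [Field F] [CharZero F]
    (n : ℕ) (hn : 0 < n)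
    (a : ℕ → ℕ) (ha : ∀ k : ℕ, 0 < k → k < n → a k < k)
    (β : ℕ → F) (hβ : ∀ k : ℕ, k < n → β k ≠ 0)
    (βn : F) (hβn : βn ≠ 0)
    (hQ : ∀ q : ℚ, q < 0 → βn ≠ (q : F) * β 0)
    (R : MvPolynomial (Fin 2) F →ₗ[F] MvPolynomial (Fin 2) F)
    (hR1 : ∀ s k m : ℕ, 0 < k → k < n →
      R (X 0 ^ (s * n + k) * X 1 ^ m) =
        (((k - a k : ℕ) : F) * β k * βn /
          ((s : F) * β 0 + ((m + k - a k : ℕ) : F) * βn)) •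
        (X 0 ^ (s * n) * X 1 ^ (m + k - a k)))
    (hR2 : ∀ s m : ℕ, 0 < s + m →
      R (X 0 ^ (s * n) * X 1 ^ m) =
        (β 0 * βn / ((s : F) * β 0 + (m : F) * βn)) •
        (X 0 ^ (s * n) * X 1 ^ m))
    (s k m s' k' m' : ℕ) (hk : k < n) (hk' : k' < n)
    (h1 : 0 < s + (m + red a k)) (h2 : 0 < s' + (m' + red a k')) :
    R (X 0 ^ (s * n + k) * X 1 ^ m) * R (X 0 ^ (s' * n + k') * X 1 ^ m') =
      R (R (X 0 ^ (s * n + k) * X 1 ^ m) * (X 0 ^ (s' * n + k') * X 1 ^ m') +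
         (X 0 ^ (s * n + k) * X 1 ^ m) * R (X 0 ^ (s' * n + k') * X 1 ^ m')) := by
  have hβ0 : β 0 ≠ 0 := hβ 0 hn
  set μ : ℕ := m + red a k with hμ
  set μ' : ℕ := m' + red a k' with hμ'
  have e1 := key n hn a ha β βn R hR1 hR2 s k m hk h1
  have e2 := key n hn a ha β βn R hR1 hR2 s' k' m' hk' h2
  set Nu : F := num a β βn k with hNu
  set Nv : F := num a β βn k' with hNv
  set A : F := (s : F) * β 0 + ((μ : ℕ) : F) * βn with hA
  set A' : F := (s' : F) * β 0 + ((μ' : ℕ) : F) * βn with hA'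
  have p1 : (X 0 ^ (s * n) * X 1 ^ μ) * (X 0 ^ (s' * n + k') * X 1 ^ m')
      = (X 0 ^ ((s + s') * n + k') * X 1 ^ (μ + m') : MvPolynomial (Fin 2) F) := by
    rw [pow_add, pow_add, pow_add, add_mul, pow_add]; ring
  have p2 : (X 0 ^ (s * n + k) * X 1 ^ m) * (X 0 ^ (s' * n) * X 1 ^ μ')
      = (X 0 ^ ((s + s') * n + k) * X 1 ^ (m + μ') : MvPolynomial (Fin 2) F) := by
    rw [pow_add, pow_add, pow_add, add_mul, pow_add]; ring
  have p3 : (X 0 ^ (s * n) * X 1 ^ μ) * (X 0 ^ (s' * n) * X 1 ^ μ')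
      = (X 0 ^ ((s + s') * n) * X 1 ^ (μ + μ') : MvPolynomial (Fin 2) F) := by
    rw [add_mul, pow_add, pow_add]; ring
  have k1 := key n hn a ha β βn R hR1 hR2 (s + s') k' (μ + m') hk' (by omega)
  have k2 := key n hn a ha β βn R hR1 hR2 (s + s') k (m + μ') hk (by omega)
  have e3 : (μ + m') + red a k' = μ + μ' := by omega
  have e4 : (m + μ') + red a k = μ + μ' := by omega
  rw [e3] at k1
  rw [e4] at k2
  rw [e1, e2, smul_mul_assoc, mul_smul_comm, smul_smul, p3, smul_mul_assoc, p1,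
    mul_smul_comm, p2, map_add, map_smul, map_smul, k1, k2, smul_smul, smul_smul,
    ← add_smul]
  congr 1
  have hE : ((s + s' : ℕ) : F) * β 0 + ((μ + μ' : ℕ) : F) * βn = A + A' := by
    rw [hA, hA']; push_cast; ring
  rw [hE]
  have hA0 : A ≠ 0 := hden β hβ0 βn hβn hQ s μ (by omega)
  have hA'0 : A' ≠ 0 := hden β hβ0 βn hβn hQ s' μ' (by omega)
  have hE0 : A + A' ≠ 0 := by
    rw [← hE]; exact hden β hβ0 βn hβn hQ (s + s') (μ + μ') (by omega)
  field_simp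
  ring

end Stmt15Aux

namespace Stmt15Aux

lemma mono_eq {F : Type*} [Field F] (d : Fin 2 →₀ ℕ) (c : F) :
    (monomial d c : MvPolynomial (Fin 2) F) = c • (X 0 ^ d 0 * X 1 ^ d 1) := by
  rw [monomial_eq, Finsupp.prod_pow, Fin.prod_univ_two, smul_eq_C_mul]

lemma monoT {F : Type*} [Field F] [CharZero F]
    (n : ℕ) (hn : 0 < n)
    (a : ℕ → ℕ) (ha : ∀ k : ℕ, 0 < k → k < n → a k < k)
    (β : ℕ → F) (hβ : ∀ k : ℕ, k < n → β k ≠ 0)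
    (βn : F) (hβn : βn ≠ 0)
    (hQ : ∀ q : ℚ, q < 0 → βn ≠ (q : F) * β 0)
    (R : MvPolynomial (Fin 2) F →ₗ[F] MvPolynomial (Fin 2) F)
    (hR1 : ∀ s k m : ℕ, 0 < k → k < n →
      R (X 0 ^ (s * n + k) * X 1 ^ m) =
        (((k - a k : ℕ) : F) * β k * βn /
          ((s : F) * β 0 + ((m + k - a k : ℕ) : F) * βn)) •
        (X 0 ^ (s * n) * X 1 ^ (m + k - a k)))
    (hR2 : ∀ s m : ℕ, 0 < s + m →
      R (X 0 ^ (s * n) * X 1 ^ m) =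
        (β 0 * βn / ((s : F) * β 0 + (m : F) * βn)) •
        (X 0 ^ (s * n) * X 1 ^ m))
    (d d' : Fin 2 →₀ ℕ) (hd : d ≠ 0) (hd' : d' ≠ 0) (c c' : F) :
    R (monomial d c) * R (monomial d' c') =
      R (R (monomial d c) * monomial d' c' + monomial d c * R (monomial d' c')) := by
  have hpos : ∀ e : Fin 2 →₀ ℕ, e ≠ 0 → 0 < e 0 + e 1 := by
    intro e he
    by_contra hc
    push_neg at hc
    apply he
    ext i
    fin_cases i <;> simp <;> omega
  have hp := hpos d hd
  have hp' := hpos d' hd'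
  have decomp : ∀ e : Fin 2 →₀ ℕ, 0 < e 0 + e 1 →
      ∃ s k : ℕ, e 0 = s * n + k ∧ k < n ∧ 0 < s + (e 1 + red a k) := by
    intro e he
    obtain ⟨s, k, hsk, hkn⟩ : ∃ s k : ℕ, e 0 = s * n + k ∧ k < n :=
      ⟨e 0 / n, e 0 % n, (Nat.div_add_mod' (e 0) n).symm, Nat.mod_lt _ hn⟩
    refine ⟨s, k, hsk, hkn, ?_⟩
    rcases Nat.eq_zero_or_pos k with h0 | h0
    · subst h0
      have hr : red a 0 = 0 := by simp [red]
      rcases Nat.eq_zero_or_pos s with hs | hs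
      · subst hs; simp at hsk; omega
      · omega
    · have hr : red a k = k - a k := by simp [red, Nat.pos_iff_ne_zero.mp h0]
      have := ha k h0 hkn
      omega
  obtain ⟨s, k, ed, hk, h1⟩ := decomp d hp
  obtain ⟨s', k', ed', hk', h2⟩ := decomp d' hp'
  have base := mono n hn a ha β hβ βn hβn hQ R hR1 hR2 s k (d 1) s' k' (d' 1) hk hk' h1 h2
  rw [mono_eq d c, mono_eq d' c', ed, ed']
  calc R (c • (X 0 ^ (s * n + k) * X 1 ^ d 1)) * R (c' • (X 0 ^ (s' * n + k') * X 1 ^ d' 1))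
      = (c * c') • (R (X 0 ^ (s * n + k) * X 1 ^ d 1) * R (X 0 ^ (s' * n + k') * X 1 ^ d' 1)) := by
        rw [map_smul, map_smul, smul_mul_assoc, mul_smul_comm, smul_smul]
    _ = (c * c') • R (R (X 0 ^ (s * n + k) * X 1 ^ d 1) * (X 0 ^ (s' * n + k') * X 1 ^ d' 1) +
          (X 0 ^ (s * n + k) * X 1 ^ d 1) * R (X 0 ^ (s' * n + k') * X 1 ^ d' 1)) := by
        rw [base]
    _ = _ := by
        simp only [map_smul, smul_mul_assoc, mul_smul_comm, smul_smul, ← smul_add]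
        rw [mul_comm c c']

end Stmt15Aux

/-- The operator `R₁` on `F₀[x,y]` given by
`R₁(x^{sn+k} y^m) = ((k−a_k)β_k β_n / (sβ₀ + (m+k−a_k)β_n)) x^{sn} y^{m+k−a_k}`
for `0 < k < n` and
`R₁(x^{sn} y^m) = (β₀β_n/(sβ₀ + mβ_n)) x^{sn} y^m` for `s + m > 0`,
with `β₀,…,β_{n−1}, β_n` nonzero and `β_n/β₀ ∉ ℚ_{<0}`, is a
Rota–Baxter operator of weight zero. -/
theorem stmt15 {F : Type*} [Field F] [CharZero F]
    (n : ℕ) (hn : 0 < n)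
    (a : ℕ → ℕ) (ha : ∀ k : ℕ, 0 < k → k < n → a k < k)
    (β : ℕ → F) (hβ : ∀ k : ℕ, k < n → β k ≠ 0)
    (βn : F) (hβn : βn ≠ 0)
    (hQ : ∀ q : ℚ, q < 0 → βn ≠ (q : F) * β 0)
    (R : MvPolynomial (Fin 2) F →ₗ[F] MvPolynomial (Fin 2) F)
    (hR1 : ∀ s k m : ℕ, 0 < k → k < n →
      R (X 0 ^ (s * n + k) * X 1 ^ m) =
        (((k - a k : ℕ) : F) * β k * βn /
          ((s : F) * β 0 + ((m + k - a k : ℕ) : F) * βn)) •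
        (X 0 ^ (s * n) * X 1 ^ (m + k - a k)))
    (hR2 : ∀ s m : ℕ, 0 < s + m →
      R (X 0 ^ (s * n) * X 1 ^ m) =
        (β 0 * βn / ((s : F) * β 0 + (m : F) * βn)) •
        (X 0 ^ (s * n) * X 1 ^ m)) :
    ∀ f g : MvPolynomial (Fin 2) F, coeff 0 f = 0 → coeff 0 g = 0 →
      R f * R g = R (R f * g + f * R g) := by
  intro f g hf hg
  have hsf : ∀ d ∈ f.support, d ≠ 0 := by
    intro d hd h0
    subst h0
    exact (mem_support_iff.mp hd) hf
  have hsg : ∀ d ∈ g.support, d ≠ 0 := by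
    intro d hd h0
    subst h0
    exact (mem_support_iff.mp hd) hg
  rw [f.as_sum, g.as_sum]
  simp only [map_sum, Finset.sum_mul_sum, ← Finset.sum_add_distrib]
  exact Finset.sum_congr rfl fun d hd => Finset.sum_congr rfl fun d' hd' =>
    Stmt15Aux.monoT n hn a ha β hβ βn hβn hQ R hR1 hR2 d d' (hsf d hd) (hsg d' hd')
      (coeff d f) (coeff d' g)
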